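/- Let $K$, $P$, $\alpha>0$ be as in the setting of positive unital projections on $C(K)$ dominating $\alpha\,\mathrm{id}$, and let $\mu_t=P^*\delta_t$. If for some $t\in K$ one has $\mu_s=\mu_t$ for all atoms $s$ of $\mu_t$, then the atomic supports satisfy: for all $s\in K$, either $J_s=J_t$ (when $s\in J_t$) or $J_s\cap J_t=\emptyset$, where $J_r$ denotes the set of atoms of $\mu_r$. -/

import Mathlib

open MeasureTheory

/-- In the setting of a positive unital projection `P` on `C(K)` with
`α • id ≤ P`, `α > 0`, and representing regular Borel measures `μ t` for
`P^* δ_t`: if for some `t` one has `μ s = μ t` for every atom `s` of `μ t`,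
then for every `s ∈ K`, either `J s = J t` (when `s ∈ J t`) or
`J s ∩ J t = ∅` (when `s ∉ J t`), where `J r` is the set of atoms of `μ r`. -/
theorem stmt8 {K : Type*} [TopologicalSpace K] [CompactSpace K] [T2Space K]
    [MeasurableSpace K] [BorelSpace K]
    (P : C(K, ℝ) →ₗ[ℝ] C(K, ℝ))
    (hproj : ∀ f, P (P f) = P f)
    (hpos : ∀ f : C(K, ℝ), 0 ≤ f → 0 ≤ P f)
    (hunit : P 1 = 1)
    (α : ℝ) (hα : 0 < α)
    (hdom : ∀ f : C(K, ℝ), 0 ≤ f → α • f ≤ P f)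
    (μ : K → Measure K)
    (hfin : ∀ t, IsFiniteMeasure (μ t))
    (hreg : ∀ t, (μ t).Regular)
    (hrep : ∀ (t : K) (f : C(K, ℝ)), ∫ x, f x ∂(μ t) = P f t)
    (t : K)
    (hatoms : ∀ s : K, μ t {s} ≠ 0 → μ s = μ t) :
    ∀ s : K,
      (μ t {s} ≠ 0 → {r : K | μ s {r} ≠ 0} = {r : K | μ t {r} ≠ 0}) ∧
      (μ t {s} = 0 → {r : K | μ s {r} ≠ 0} ∩ {r : K | μ t {r} ≠ 0} = ∅) := by
  classical
  haveI : ∀ x : K, IsFiniteMeasure (μ x) := hfin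
  haveI : ∀ x : K, (μ x).Regular := hreg
  -- every continuous function is integrable
  have hint : ∀ (x : K) (f : C(K, ℝ)), Integrable (fun y => f y) (μ x) := fun x f =>
    f.continuous.integrable_of_hasCompactSupport (HasCompactSupport.of_compactSpace _)
  -- pointwise nonnegativity
  have hptw : ∀ {f : C(K, ℝ)}, 0 ≤ f → ∀ z, 0 ≤ f z := by
    intro f hf z
    simpa using ContinuousMap.le_def.mp hf z
  -- total mass one
  have hmass : ∀ x : K, μ x Set.univ = 1 := by
    intro x
    have h1 : ∫ y, (1 : C(K, ℝ)) y ∂(μ x) = P 1 x := hrep x 1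
    rw [hunit] at h1
    simp only [ContinuousMap.one_apply, integral_const, smul_eq_mul, mul_one] at h1
    exact (ENNReal.toReal_eq_one_iff _).mp h1
  -- atom bound
  have hatomle : ∀ (x y : K) (f : C(K, ℝ)), 0 ≤ f →
      (μ x {y}).toReal * f y ≤ ∫ z, f z ∂(μ x) := by
    intro x y f hf
    have h1 : ∫ z in ({y} : Set K), f z ∂(μ x) = (μ x {y}).toReal • f y :=
      integral_singleton _ _
    calc (μ x {y}).toReal * f y = ∫ z in ({y} : Set K), f z ∂(μ x) := by
          rw [h1, smul_eq_mul]
      _ ≤ ∫ z, f z ∂(μ x) :=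
          setIntegral_le_integral (hint x f) (Filter.Eventually.of_forall (hptw hf))
  -- integral of a `[0,1]`-valued function vanishing off `U` is at most `μ U`
  have hbump : ∀ (x : K) (U : Set K), IsOpen U → ∀ φ : C(K, ℝ),
      Set.EqOn φ 0 Uᶜ → (∀ z, φ z ∈ Set.Icc (0 : ℝ) 1) →
      ∫ z, φ z ∂(μ x) ≤ (μ x U).toReal := by
    intro x U hU φ h0 hb
    have hsplit : ∫ z, φ z ∂(μ x)
        = (∫ z in U, φ z ∂(μ x)) + ∫ z in Uᶜ, φ z ∂(μ x) :=
      (integral_add_compl hU.measurableSet (hint x φ)).symm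
    have hz : ∫ z in Uᶜ, φ z ∂(μ x) = 0 := by
      rw [setIntegral_congr_fun hU.isClosed_compl.measurableSet h0]
      simp
    have hle : ∫ z in U, φ z ∂(μ x) ≤ ∫ z in U, (1 : ℝ) ∂(μ x) := by
      refine setIntegral_mono_on ((hint x φ).integrableOn)
        ((integrable_const 1).integrableOn) hU.measurableSet ?_
      intro z _
      exact (hb z).2
    have hone : ∫ z in U, (1 : ℝ) ∂(μ x) = (μ x U).toReal := by
      rw [setIntegral_const, smul_eq_mul, mul_one]
      rfl
    rw [hsplit, hz, add_zero]
    rw [hone] at hle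
    exact hle
  -- Urysohn bump at a point inside an open set
  have hury : ∀ (y : K) (U : Set K), IsOpen U → y ∈ U →
      ∃ φ : C(K, ℝ), Set.EqOn φ 0 Uᶜ ∧ φ y = 1 ∧ (∀ z, φ z ∈ Set.Icc (0 : ℝ) 1) := by
    intro y U hU hy
    obtain ⟨φ, hφ0, hφ1, hφb⟩ := exists_continuous_zero_one_of_isClosed
      hU.isClosed_compl isClosed_singleton
      (Set.disjoint_left.mpr (fun z hz hz' => hz (by rwa [Set.mem_singleton_iff.mp hz'])))
    exact ⟨φ, hφ0, by simpa using hφ1 rfl, hφb⟩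
  -- atoms carry mass at least α
  have hαatom : ∀ x : K, α ≤ (μ x {x}).toReal := by
    intro x
    by_contra hlt
    push_neg at hlt
    have hlt' : μ x {x} < ENNReal.ofReal α := by
      rw [ENNReal.lt_ofReal_iff_toReal_lt (measure_ne_top _ _)]
      exact hlt
    obtain ⟨U, hsub, hUopen, hUlt⟩ := Set.exists_isOpen_lt_of_lt _ _ hlt'
    obtain ⟨φ, hφ0, hφ1, hφb⟩ := hury x U hUopen (hsub rfl)
    have hφpos : (0 : C(K, ℝ)) ≤ φ :=
      ContinuousMap.le_def.mpr (fun z => by simpa using (hφb z).1)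
    have hd := ContinuousMap.le_def.mp (hdom φ hφpos) x
    simp only [ContinuousMap.smul_apply, smul_eq_mul, hφ1, mul_one] at hd
    have h2 : (P φ) x = ∫ z, φ z ∂(μ x) := (hrep x φ).symm
    have h3 : ∫ z, φ z ∂(μ x) ≤ (μ x U).toReal := hbump x U hUopen φ hφ0 hφb
    have h4 : (μ x U).toReal < α := by
      have h5 := (ENNReal.toReal_lt_toReal (measure_ne_top _ _) ENNReal.ofReal_ne_top).mpr hUlt
      rwa [ENNReal.toReal_ofReal hα.le] at h5
    rw [h2] at hd
    linarith
  intro s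
  constructor
  · intro h
    rw [hatoms s h]
  · intro hs0
    rw [Set.eq_empty_iff_forall_notMem]
    rintro r ⟨hsr, htr⟩
    simp only [Set.mem_setOf_eq] at hsr htr
    have hrt : μ r = μ t := hatoms r htr
    have hrs : r ≠ s := fun h => htr (by rwa [h])
    set c : ℝ := (μ s {r}).toReal with hc_def
    have hc : 0 < c := ENNReal.toReal_pos hsr (measure_ne_top _ _)
    set a : ℝ := (μ s {s}).toReal with ha_def
    have hαa : α ≤ a := hαatom s
    have ha0 : 0 < a := lt_of_lt_of_le hα hαa
    have ha1 : a ≤ 1 := by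
      have h1 : μ s {s} ≤ μ s Set.univ := measure_mono (Set.subset_univ _)
      rw [hmass s] at h1
      simpa [ha_def] using ENNReal.toReal_mono ENNReal.one_ne_top h1
    -- in fact a < 1, for otherwise μ s = δ_s and c = 0
    have halt : a < 1 := by
      rcases lt_or_eq_of_le ha1 with h | h
      · exact h
      · exfalso
        have h1 : μ s {s} = 1 := (ENNReal.toReal_eq_one_iff _).mp h
        have h2 : μ s ({s}ᶜ) = 0 := by
          rw [measure_compl (measurableSet_singleton s) (measure_ne_top _ _), hmass s, h1,
            tsub_self]
        have h3 : μ s {r} ≤ μ s ({s}ᶜ) :=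
          measure_mono (by simpa [Set.singleton_subset_iff] using hrs.symm)
        rw [h2, le_zero_iff] at h3
        exact hsr h3
    have h1a : 0 < 1 - a := by linarith
    -- the fixed-point identity  ∫ (P g) dμ x = (P g) x
    have hfix : ∀ (x : K) (g : C(K, ℝ)), ∫ z, (P g) z ∂(μ x) = (P g) x := by
      intro x g
      rw [hrep x (P g), hproj]
    -- base estimate: μ s ≥ c • μ t on continuous functions
    have base : ∀ g : C(K, ℝ), 0 ≤ g →
        c * ∫ z, g z ∂(μ t) ≤ ∫ z, g z ∂(μ s) := by
      intro g hg
      have hPg : 0 ≤ P g := hpos g hg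
      have h1 : c * (P g) r ≤ ∫ z, (P g) z ∂(μ s) := hatomle s r (P g) hPg
      have h2 : (P g) r = ∫ z, g z ∂(μ t) := by
        rw [← hrep r g, hrt]
      have h3 : ∫ z, (P g) z ∂(μ s) = ∫ z, g z ∂(μ s) := by
        rw [hfix s g, ← hrep s g]
      rw [h2, h3] at h1
      exact h1
    -- bootstrap: if μ s ≥ γ • μ t then μ s ≥ (γ/(1-a)) • μ t
    have key : ∀ γ : ℝ, 0 ≤ γ →
        (∀ g : C(K, ℝ), 0 ≤ g → γ * ∫ z, g z ∂(μ t) ≤ ∫ z, g z ∂(μ s)) →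
        ∀ g : C(K, ℝ), 0 ≤ g →
          (γ / (1 - a)) * ∫ z, g z ∂(μ t) ≤ ∫ z, g z ∂(μ s) := by
      intro γ hγ hval g hg
      have hPg : 0 ≤ P g := hpos g hg
      set h : C(K, ℝ) := P g with hh_def
      have hhz : ∀ z, 0 ≤ h z := hptw hPg
      set M : ℝ := ‖h‖ + 1 with hM_def
      have hM0 : 0 < M := by positivity
      have hhM : ∀ z, h z ≤ M := by
        intro z
        have h5 := (abs_le.mp (by simpa [Real.norm_eq_abs] using h.norm_coe_le_norm z)).2
        simp only [hM_def]
        linarith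
      -- main inequality:  a * h s + γ * ∫ h dμ t ≤ ∫ h dμ s
      have claim : a * h s + γ * ∫ z, h z ∂(μ t) ≤ ∫ z, h z ∂(μ s) := by
        refine le_of_forall_sub_le ?_
        intro ε hε
        set η : ℝ := ε / (γ * M + 1) with hη_def
        have hηd : 0 < γ * M + 1 := by positivity
        have hη : 0 < η := by positivity
        obtain ⟨U, hsub, hUopen, hUlt⟩ := Set.exists_isOpen_lt_of_lt ({s} : Set K)
          (ENNReal.ofReal η) (by rw [hs0]; exact ENNReal.ofReal_pos.mpr hη)
        obtain ⟨φ, hφ0, hφ1, hφb⟩ := hury s U hUopen (hsub rfl)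
        set g₁ : C(K, ℝ) := h * φ with hg1_def
        set g₂ : C(K, ℝ) := h * (1 - φ) with hg2_def
        have hg₁0 : 0 ≤ g₁ := ContinuousMap.le_def.mpr fun z => by
          simp only [hg1_def, ContinuousMap.zero_apply, ContinuousMap.mul_apply]
          exact mul_nonneg (hhz z) (hφb z).1
        have hg₂0 : 0 ≤ g₂ := ContinuousMap.le_def.mpr fun z => by
          simp only [hg2_def, ContinuousMap.zero_apply, ContinuousMap.mul_apply,
            ContinuousMap.sub_apply, ContinuousMap.one_apply]
          exact mul_nonneg (hhz z) (by linarith [(hφb z).2])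
        have hsum : ∀ z, h z = g₁ z + g₂ z := by
          intro z
          simp only [hg1_def, hg2_def, ContinuousMap.mul_apply, ContinuousMap.sub_apply,
            ContinuousMap.one_apply]
          ring
        have hsplit_s : ∫ z, h z ∂(μ s) = (∫ z, g₁ z ∂(μ s)) + ∫ z, g₂ z ∂(μ s) := by
          rw [← integral_add (hint s g₁) (hint s g₂)]
          exact integral_congr_ae (Filter.Eventually.of_forall hsum)
        have hsplit_t : ∫ z, h z ∂(μ t) = (∫ z, g₁ z ∂(μ t)) + ∫ z, g₂ z ∂(μ t) := by
          rw [← integral_add (hint t g₁) (hint t g₂)]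
          exact integral_congr_ae (Filter.Eventually.of_forall hsum)
        -- lower bound at the atom s
        have hA : a * h s ≤ ∫ z, g₁ z ∂(μ s) := by
          have h6 := hatomle s s g₁ hg₁0
          simpa [hg1_def, ContinuousMap.mul_apply, hφ1] using h6
        -- lower bound from the hypothesis
        have hB : γ * ∫ z, g₂ z ∂(μ t) ≤ ∫ z, g₂ z ∂(μ s) := hval g₂ hg₂0
        -- the μ t–integral of g₁ is small
        have hC : ∫ z, g₁ z ∂(μ t) ≤ M * η := by
          have h6 : ∫ z, g₁ z ∂(μ t) ≤ ∫ z, M * φ z ∂(μ t) := by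
            refine integral_mono (hint t g₁) ((hint t φ).const_mul M) ?_
            intro z
            simp only [hg1_def, ContinuousMap.mul_apply]
            exact mul_le_mul_of_nonneg_right (hhM z) (hφb z).1
          have h7 : ∫ z, M * φ z ∂(μ t) = M * ∫ z, φ z ∂(μ t) := integral_const_mul _ _
          have h8 : ∫ z, φ z ∂(μ t) ≤ (μ t U).toReal := hbump t U hUopen φ hφ0 hφb
          have h9 : (μ t U).toReal ≤ η := by
            have h10 := (ENNReal.toReal_lt_toReal (measure_ne_top _ _)
              ENNReal.ofReal_ne_top).mpr hUlt
            rw [ENNReal.toReal_ofReal hη.le] at h10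
            exact h10.le
          calc ∫ z, g₁ z ∂(μ t) ≤ M * ∫ z, φ z ∂(μ t) := by rw [← h7]; exact h6
            _ ≤ M * η := mul_le_mul_of_nonneg_left (le_trans h8 h9) hM0.le
        have hγMη : γ * (M * η) ≤ ε := by
          have hεeq : η * (γ * M + 1) = ε := by
            rw [hη_def]
            field_simp
          nlinarith [mul_nonneg hγ hM0.le, hη.le]
        have hD : γ * ∫ z, g₁ z ∂(μ t) ≤ γ * (M * η) :=
          mul_le_mul_of_nonneg_left hC hγ
        rw [hsplit_s, hsplit_t, mul_add]
        linarith
      have hs_eq : ∫ z, h z ∂(μ s) = h s := hfix s g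
      have ht_eq : ∫ z, h z ∂(μ t) = ∫ z, g z ∂(μ t) := by
        rw [hfix t g, ← hrep t g]
      have hgs : ∫ z, g z ∂(μ s) = h s := hrep s g
      rw [hs_eq, ht_eq] at claim
      rw [hgs, div_mul_eq_mul_div, div_le_iff₀ h1a]
      nlinarith [claim]
    -- iterate the bootstrap
    have iter : ∀ n : ℕ, ∀ g : C(K, ℝ), 0 ≤ g →
        (c / (1 - a) ^ n) * ∫ z, g z ∂(μ t) ≤ ∫ z, g z ∂(μ s) := by
      intro n
      induction n with
      | zero => simpa using base
      | succ n ih =>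
          have hγ : 0 ≤ c / (1 - a) ^ n :=
            div_nonneg hc.le (pow_nonneg h1a.le n)
          intro g hg
          have h2 := key _ hγ ih g hg
          rwa [div_div, ← pow_succ] at h2
    -- contradiction: γ must stay ≤ 1
    obtain ⟨n, hn⟩ := exists_pow_lt_of_lt_one hc (by linarith : 1 - a < 1)
    have h1 := iter n 1 zero_le_one
    simp only [ContinuousMap.one_apply, integral_const, Measure.real, hmass, smul_eq_mul, mul_one,
      ENNReal.toReal_one] at h1
    have h2 : 1 < c / (1 - a) ^ n := (one_lt_div (pow_pos h1a n)).mpr hn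
    linarith
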